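/- Gevrey bound for the formal solution of the standard-form equation (scalar case). Fix an integer d ≥ 0 and a domain X₀ ⊆ ℂ^d. Let G_{km} (k, m ∈ ℕ) be holomorphic functions on X₀ and suppose there are constants A, B > 0 with |G_{km}(x)| ≤ A·B^{k+m}·k! for all k, m ∈ ℕ and all x ∈ X₀. Define holomorphic functions g_n : X₀ → ℂ by g₀ := 0 and, for n ≥ 0, g_{n+1}(x) := Σ_{k=0}^{n} Σ_{m=0}^{n−k} Σ_{i₁+⋯+i_m = n−k, i_j ≥ 0} G_{km}(x)·g_{i₁}(x)⋯g_{i_m}(x) (the coefficients of the unique formal power series solution of w = ℏ·Ĝ(x,ℏ,w) with Ĝ = Σ_{k,m} G_{km}(x)ℏᵏwᵐ). Then there exists a constant M > 0 such that |g_{n+1}(x)| ≤ M^{n+1}·n! for all n ∈ ℕ and all x ∈ X₀. In particular the formal Borel transform Σ_{n≥0} g_{n+1}(x)·ξⁿ/n! converges uniformly on X₀ for |ξ| < 1/M. -/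

import Mathlib

open Complex Set Filter

noncomputable section

/-- A domain: a nonempty open connected set. -/
def IsCxDomain {E : Type*} [TopologicalSpace E] (U : Set E) : Prop :=
  IsOpen U ∧ IsConnected U

/-- The finite set of compositions of `j` into `m` (nonnegative) parts. -/
def comps (m j : ℕ) : Finset (Fin m → ℕ) :=
  (Fintype.piFinset fun _ : Fin m => Finset.range (j + 1)).filter fun t => ∑ i, t i = j

namespace GevAux

noncomputable def wfn (i : ℕ) : ℝ := (i - 1).factorial / (i : ℝ) ^ 2

lemma wfn_zero : wfn 0 = 0 := by simp [wfn]

lemma wfn_nonneg (i : ℕ) : 0 ≤ wfn i := by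
  unfold wfn; positivity

lemma wfn_succ (s : ℕ) : wfn (s + 1) = s.factorial / ((s : ℝ) + 1) ^ 2 := by
  simp [wfn]

lemma mem_comps {m j : ℕ} {t : Fin m → ℕ} : t ∈ comps m j ↔ ∑ i, t i = j := by
  constructor
  · intro h; exact (Finset.mem_filter.mp h).2
  · intro h
    refine Finset.mem_filter.mpr ⟨Fintype.mem_piFinset.mpr fun i => ?_, h⟩
    refine Finset.mem_range.mpr (Nat.lt_succ_of_le ?_)
    calc t i ≤ ∑ i, t i := Finset.single_le_sum (fun _ _ => Nat.zero_le _) (Finset.mem_univ i)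
    _ = j := h

lemma sum_comps_zero (f : ℕ → ℝ) (r : ℕ) :
    ∑ t ∈ comps 0 r, ∏ j : Fin 0, f (t j) = if r = 0 then 1 else 0 := by
  rcases Nat.eq_zero_or_pos r with hr | hr
  · subst hr
    have h1 : comps 0 0 = {(finZeroElim : Fin 0 → ℕ)} := by
      apply Finset.eq_singleton_iff_unique_mem.mpr
      refine ⟨mem_comps.mpr (by simp), fun t _ => funext fun i => i.elim0⟩
    simp [h1]
  · have h1 : comps 0 r = ∅ := by
      apply Finset.eq_empty_iff_forall_notMem.mpr
      intro t ht
      have := mem_comps.mp ht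
      simp at this
      omega
    simp [h1, Nat.pos_iff_ne_zero.mp hr]

lemma sum_comps_succ (f : ℕ → ℝ) (m s : ℕ) :
    ∑ t ∈ comps (m + 1) s, ∏ j, f (t j)
      = ∑ i ∈ Finset.range (s + 1), f i * ∑ t ∈ comps m (s - i), ∏ j, f (t j) := by
  have hr : ∑ i ∈ Finset.range (s + 1), f i * ∑ t ∈ comps m (s - i), ∏ j, f (t j)
      = ∑ p ∈ (Finset.range (s + 1)).sigma (fun i => comps m (s - i)),
          f p.1 * ∏ j, f (p.2 j) := by
    rw [Finset.sum_sigma]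
    exact Finset.sum_congr rfl fun i _ => by rw [Finset.mul_sum]
  rw [hr]
  refine Finset.sum_nbij' (fun t : Fin (m + 1) → ℕ => (⟨t 0, Fin.tail t⟩ : (_ : ℕ) × (Fin m → ℕ)))
    (fun p => Fin.cons p.1 p.2) ?_ ?_ ?_ ?_ ?_
  · intro t ht
    have hsum := mem_comps.mp ht
    rw [Fin.sum_univ_succ] at hsum
    refine Finset.mem_sigma.mpr ⟨Finset.mem_range.mpr (by dsimp only; omega), ?_⟩
    refine mem_comps.mpr ?_
    have htail : ∑ i : Fin m, Fin.tail t i = ∑ i : Fin m, t i.succ := rfl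
    rw [htail]
    dsimp only
    omega
  · intro p hp
    obtain ⟨h1, h2⟩ := Finset.mem_sigma.mp hp
    have h1 := Finset.mem_range.mp h1
    have h2 := mem_comps.mp h2
    refine mem_comps.mpr ?_
    rw [Fin.sum_univ_succ]
    simp only [Fin.cons_zero, Fin.cons_succ]
    have : ∑ i : Fin m, p.2 i = s - p.1 := h2
    omega
  · intro t _; exact Fin.cons_self_tail t
  · intro p _
    simp
  · intro t _
    rw [Fin.prod_univ_succ]
    simp [Fin.tail]


lemma inv_sq_partial (N : ℕ) :
    ∑ j ∈ Finset.range N, (1 : ℝ) / ((j : ℝ) + 1) ^ 2 ≤ 2 - 2 / ((N : ℝ) + 1) := by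
  induction N with
  | zero => norm_num
  | succ N ih =>
    rw [Finset.sum_range_succ]
    have h1 : (1 : ℝ) / ((N : ℝ) + 1) ^ 2 ≤ 2 / ((N : ℝ) + 1) - 2 / ((N : ℝ) + 1 + 1) := by
      have hN : (0 : ℝ) < (N : ℝ) + 1 := by positivity
      have hN2 : (0 : ℝ) < (N : ℝ) + 2 := by positivity
      rw [div_sub_div _ _ (ne_of_gt hN) (by positivity), div_le_div_iff₀ (by positivity) (by positivity)]
      ring_nf
      nlinarith [sq_nonneg ((N:ℝ)+1)]
    push_cast
    linarith

lemma inv_sq_total (s : ℕ) : ∑ j ∈ Finset.range (s + 1), (1 : ℝ) / (j : ℝ) ^ 2 ≤ 2 := by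
  rw [Finset.sum_range_succ']
  have h0 : (1 : ℝ) / ((0 : ℕ) : ℝ) ^ 2 = 0 := by norm_num
  rw [h0, add_zero]
  have := inv_sq_partial s
  have h2 : (0 : ℝ) < 2 / ((s : ℝ) + 1) := by positivity
  have hcast : ∑ j ∈ Finset.range s, (1 : ℝ) / ((j + 1 : ℕ) : ℝ) ^ 2
      = ∑ j ∈ Finset.range s, (1 : ℝ) / ((j : ℝ) + 1) ^ 2 := by push_cast; rfl
  rw [hcast]
  linarith [inv_sq_partial s]

lemma conv_bound (s : ℕ) :
    ∑ j ∈ Finset.range (s + 1), wfn j * wfn (s - j) ≤ 16 * wfn s := by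
  rcases Nat.eq_zero_or_pos s with hs | hs
  · subst hs
    simp [wfn_zero]
  -- termwise bound
  have hterm : ∀ j ∈ Finset.range (s + 1),
      wfn j * wfn (s - j) ≤ 2 * (s - 1).factorial / (s : ℝ) ^ 2 *
        ((1 : ℝ) / (j : ℝ) ^ 2 + 1 / ((s - j : ℕ) : ℝ) ^ 2) := by
    intro j hj
    have hj' : j ≤ s := Nat.lt_succ_iff.mp (Finset.mem_range.mp hj)
    rcases Nat.eq_zero_or_pos j with hj0 | hj0
    · subst hj0
      rw [wfn_zero, zero_mul]
      positivity
    rcases Nat.eq_or_lt_of_le hj' with hjs | hjs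
    · subst hjs
      rw [Nat.sub_self, wfn_zero, mul_zero]
      positivity
    -- 1 ≤ j < s
    set b := s - j with hb
    have hb1 : 1 ≤ b := by omega
    have hjb : j + b = s := by omega
    have hfact : ((j - 1).factorial : ℝ) * ((b - 1).factorial : ℝ) ≤ ((s - 1).factorial : ℝ) := by
      have h1 : (j - 1).factorial * (b - 1).factorial ∣ (j - 1 + (b - 1)).factorial :=
        Nat.factorial_mul_factorial_dvd_factorial_add _ _
      have h2 : (j - 1) + (b - 1) = s - 2 := by omega
      have h3 : (j - 1).factorial * (b - 1).factorial ≤ (s - 2).factorial := by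
        rw [h2] at h1
        exact Nat.le_of_dvd (Nat.factorial_pos _) h1
      have h4 : (s - 2).factorial ≤ (s - 1).factorial :=
        Nat.factorial_le (by omega)
      exact_mod_cast le_trans h3 h4
    have hjR : (1 : ℝ) ≤ (j : ℝ) := by exact_mod_cast hj0
    have hbR : (1 : ℝ) ≤ (b : ℝ) := by exact_mod_cast hb1
    have hsR : (s : ℝ) = (j : ℝ) + (b : ℝ) := by exact_mod_cast hjb.symm
    have hsq : (1 : ℝ) / ((j : ℝ) ^ 2 * (b : ℝ) ^ 2) ≤
        2 / (s : ℝ) ^ 2 * (1 / (j : ℝ) ^ 2 + 1 / (b : ℝ) ^ 2) := by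
      rw [div_add_div _ _ (by positivity) (by positivity), div_mul_div_comm,
        div_le_div_iff₀ (by positivity) (by positivity), hsR]
      nlinarith [mul_nonneg (sq_nonneg ((j : ℝ) - (b : ℝ)))
        (mul_nonneg (sq_nonneg (j : ℝ)) (sq_nonneg (b : ℝ)))]
    have hwj : wfn j = ((j - 1).factorial : ℝ) / (j : ℝ) ^ 2 := rfl
    have hwb : wfn b = ((b - 1).factorial : ℝ) / (b : ℝ) ^ 2 := rfl
    rw [hwj, hwb]
    have lhs_eq : ((j - 1).factorial : ℝ) / (j : ℝ) ^ 2 * (((b - 1).factorial : ℝ) / (b : ℝ) ^ 2)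
        = (((j - 1).factorial : ℝ) * ((b - 1).factorial : ℝ)) * (1 / ((j : ℝ) ^ 2 * (b : ℝ) ^ 2)) := by
      ring
    rw [lhs_eq]
    calc (((j - 1).factorial : ℝ) * ((b - 1).factorial : ℝ)) * (1 / ((j : ℝ) ^ 2 * (b : ℝ) ^ 2))
        ≤ ((s - 1).factorial : ℝ) * (2 / (s : ℝ) ^ 2 * (1 / (j : ℝ) ^ 2 + 1 / (b : ℝ) ^ 2)) := by
          apply mul_le_mul hfact hsq (by positivity) (by positivity)
      _ = 2 * (s - 1).factorial / (s : ℝ) ^ 2 * ((1 : ℝ) / (j : ℝ) ^ 2 + 1 / (b : ℝ) ^ 2) := by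
          ring
  calc ∑ j ∈ Finset.range (s + 1), wfn j * wfn (s - j)
      ≤ ∑ j ∈ Finset.range (s + 1), 2 * (s - 1).factorial / (s : ℝ) ^ 2 *
          ((1 : ℝ) / (j : ℝ) ^ 2 + 1 / ((s - j : ℕ) : ℝ) ^ 2) := Finset.sum_le_sum hterm
    _ = 2 * (s - 1).factorial / (s : ℝ) ^ 2 *
          (∑ j ∈ Finset.range (s + 1), (1 : ℝ) / (j : ℝ) ^ 2
            + ∑ j ∈ Finset.range (s + 1), (1 : ℝ) / ((s - j : ℕ) : ℝ) ^ 2) := by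
        rw [← Finset.mul_sum, Finset.sum_add_distrib]
    _ ≤ 2 * (s - 1).factorial / (s : ℝ) ^ 2 * (2 + 2) := by
        have hrefl : ∑ j ∈ Finset.range (s + 1), (1 : ℝ) / ((s - j : ℕ) : ℝ) ^ 2
            = ∑ j ∈ Finset.range (s + 1), (1 : ℝ) / (j : ℝ) ^ 2 := by
          have := Finset.sum_range_reflect (fun j => (1 : ℝ) / (j : ℝ) ^ 2) (s + 1)
          simpa using this
        rw [hrefl]
        have h2 := inv_sq_total s
        apply mul_le_mul_of_nonneg_left _ (by positivity)
        linarith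
    _ ≤ 16 * wfn s := by
        have hwfn : wfn s = ((s - 1).factorial : ℝ) / (s : ℝ) ^ 2 := rfl
        rw [hwfn]
        have : (0:ℝ) ≤ ((s - 1).factorial : ℝ) / (s : ℝ) ^ 2 := by positivity
        calc 2 * (s - 1).factorial / (s : ℝ) ^ 2 * (2 + 2)
            = 8 * (((s - 1).factorial : ℝ) / (s : ℝ) ^ 2) := by ring
          _ ≤ 16 * (((s - 1).factorial : ℝ) / (s : ℝ) ^ 2) := by linarith


lemma S_nonneg (m s : ℕ) : 0 ≤ ∑ t ∈ comps m s, ∏ j, wfn (t j) :=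
  Finset.sum_nonneg fun t _ => Finset.prod_nonneg fun j _ => wfn_nonneg _

lemma comps_prod_bound (m : ℕ) : ∀ s : ℕ,
    ∑ t ∈ comps (m + 1) s, ∏ j, wfn (t j) ≤ 16 ^ m * wfn s := by
  induction m with
  | zero =>
    intro s
    rw [sum_comps_succ]
    have heq : ∀ i ∈ Finset.range (s + 1),
        wfn i * ∑ t ∈ comps 0 (s - i), ∏ j, wfn (t j) = if i = s then wfn s else 0 := by
      intro i hi
      have hi' : i ≤ s := Nat.lt_succ_iff.mp (Finset.mem_range.mp hi)
      rw [sum_comps_zero]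
      by_cases h : i = s
      · subst h; simp
      · have : ¬ (s - i = 0) := by omega
        simp [this, h]
    rw [Finset.sum_congr rfl heq, Finset.sum_ite_eq' (Finset.range (s + 1)) s (fun _ => wfn s)]
    simp
  | succ m ih =>
    intro s
    rw [sum_comps_succ]
    calc ∑ i ∈ Finset.range (s + 1), wfn i * ∑ t ∈ comps (m + 1) (s - i), ∏ j, wfn (t j)
        ≤ ∑ i ∈ Finset.range (s + 1), wfn i * (16 ^ m * wfn (s - i)) := by
          refine Finset.sum_le_sum fun i _ => ?_
          exact mul_le_mul_of_nonneg_left (ih (s - i)) (wfn_nonneg i)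
      _ = 16 ^ m * ∑ i ∈ Finset.range (s + 1), wfn i * wfn (s - i) := by
          rw [Finset.mul_sum]; exact Finset.sum_congr rfl fun i _ => by ring
      _ ≤ 16 ^ m * (16 * wfn s) := by
          exact mul_le_mul_of_nonneg_left (conv_bound s) (by positivity)
      _ = 16 ^ (m + 1) * wfn s := by ring

lemma nat_succ_sq_le (n : ℕ) : ((n : ℝ) + 1) ^ 2 ≤ 4 ^ n := by
  have h : n + 1 ≤ 2 ^ n := (Nat.lt_two_pow_self (n := n))
  have hR : (n : ℝ) + 1 ≤ 2 ^ n := by exact_mod_cast h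
  have h2 : (0 : ℝ) ≤ (n : ℝ) + 1 := by positivity
  calc ((n : ℝ) + 1) ^ 2 ≤ (2 ^ n) ^ 2 := by nlinarith
    _ = 4 ^ n := by rw [← pow_mul, mul_comm, pow_mul]; norm_num

lemma fact_ineq {k s n : ℕ} (hks : k + s = n) (hs : 1 ≤ s) :
    ((k.factorial : ℝ)) * ((s - 1).factorial : ℝ) * ((n : ℝ) + 1) ^ 2
      ≤ 4 * 4 ^ k * (s : ℝ) ^ 2 * (n.factorial : ℝ) := by
  have h1 : (k.factorial * (s - 1).factorial) * s ≤ n.factorial := by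
    have : k.factorial * s.factorial ∣ n.factorial := by
      rw [← hks]; exact Nat.factorial_mul_factorial_dvd_factorial_add k s
    have h2 := Nat.le_of_dvd (Nat.factorial_pos n) this
    calc k.factorial * (s - 1).factorial * s = k.factorial * ((s - 1).factorial * s) := by ring
      _ = k.factorial * s.factorial := by
          congr 1
          rw [mul_comm]
          conv_rhs => rw [show s = (s - 1) + 1 by omega]
          rw [Nat.factorial_succ]
          congr 1
          omega
      _ ≤ n.factorial := h2
  have h1R : ((k.factorial : ℝ)) * ((s - 1).factorial : ℝ) * (s : ℝ) ≤ (n.factorial : ℝ) := by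
    exact_mod_cast h1
  have h2 : ((n : ℝ) + 1) ^ 2 ≤ 4 * ((k : ℝ) + 1) ^ 2 * (s : ℝ) ^ 2 := by
    have hsR : (1 : ℝ) ≤ (s : ℝ) := by exact_mod_cast hs
    have hnR : (n : ℝ) = (k : ℝ) + (s : ℝ) := by exact_mod_cast hks.symm
    have hkR : (0 : ℝ) ≤ (k : ℝ) := Nat.cast_nonneg k
    nlinarith [sq_nonneg ((k : ℝ) + 1), sq_nonneg ((s : ℝ) - 1),
      mul_nonneg hkR (sub_nonneg.mpr hsR)]
  have h3 : ((k : ℝ) + 1) ^ 2 ≤ 4 ^ k := nat_succ_sq_le k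
  have hfpos : (0 : ℝ) < (k.factorial : ℝ) * ((s - 1).factorial : ℝ) := by positivity
  have hspos : (0 : ℝ) < (s : ℝ) := by exact_mod_cast hs
  calc ((k.factorial : ℝ)) * ((s - 1).factorial : ℝ) * ((n : ℝ) + 1) ^ 2
      ≤ ((k.factorial : ℝ)) * ((s - 1).factorial : ℝ) * (4 * ((k : ℝ) + 1) ^ 2 * (s : ℝ) ^ 2) :=
        mul_le_mul_of_nonneg_left h2 hfpos.le
    _ = (((k.factorial : ℝ)) * ((s - 1).factorial : ℝ) * (s : ℝ)) * (4 * ((k : ℝ) + 1) ^ 2 * (s : ℝ)) := by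
        ring
    _ ≤ (n.factorial : ℝ) * (4 * 4 ^ k * (s : ℝ)) := by
        apply mul_le_mul h1R _ (by positivity) (Nat.cast_nonneg _)
        apply mul_le_mul_of_nonneg_right _ hspos.le
        exact mul_le_mul_of_nonneg_left h3 (by norm_num)
    _ = 4 * 4 ^ k * (s : ℝ) * (n.factorial : ℝ) := by ring
    _ ≤ 4 * 4 ^ k * (s : ℝ) ^ 2 * (n.factorial : ℝ) := by
        have hs1R : (1 : ℝ) ≤ (s : ℝ) := by exact_mod_cast hs
        have hs2 : (s : ℝ) ≤ (s : ℝ) ^ 2 := by nlinarith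
        have h4 : (0 : ℝ) ≤ 4 * 4 ^ k * (n.factorial : ℝ) := by positivity
        nlinarith


lemma per_term_bound (A B eps M : ℝ) (hA : 0 < A) (hB : 0 < B) (heps : 0 < eps)
    (hepsB : 32 * eps * B ≤ 1) (hM32 : 32 * B * (A + 1) ≤ M)
    (k m' s n : ℕ) (hks : k + s = n) (hs : 1 ≤ s) :
    A * B ^ (k + (m' + 1)) * (k.factorial : ℝ) *
        (eps ^ (m' + 1) * (M ^ s * (16 ^ m' * wfn s)))
      ≤ eps * M ^ (n + 1) * wfn (n + 1) * ((1 / 8) ^ (k + 1) * (1 / 2) ^ m') := by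
  have hMpos : 0 < M := lt_of_lt_of_le (by positivity) hM32
  -- core inequality
  have hcore : A * (32 * B) ^ (k + 1) ≤ M ^ (k + 1) := by
    have h1 : A * (32 * B) ^ (k + 1) ≤ (A + 1) ^ (k + 1) * (32 * B) ^ (k + 1) := by
      apply mul_le_mul_of_nonneg_right _ (by positivity)
      calc A ≤ A + 1 := by linarith
        _ ≤ (A + 1) ^ (k + 1) := le_self_pow₀ (by linarith) (Nat.succ_ne_zero k)
    calc A * (32 * B) ^ (k + 1) ≤ (A + 1) ^ (k + 1) * (32 * B) ^ (k + 1) := h1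
      _ = (32 * B * (A + 1)) ^ (k + 1) := by rw [← mul_pow]; ring_nf
      _ ≤ M ^ (k + 1) := pow_le_pow_left₀ (by positivity) hM32 _
  have hpoly : A * B ^ (k + 1) * (k.factorial : ℝ) * ((s - 1).factorial : ℝ) * ((n : ℝ) + 1) ^ 2
      ≤ M ^ (k + 1) * (1 / 8) ^ (k + 1) * (n.factorial : ℝ) * (s : ℝ) ^ 2 := by
    have hf := fact_ineq hks hs
    calc A * B ^ (k + 1) * (k.factorial : ℝ) * ((s - 1).factorial : ℝ) * ((n : ℝ) + 1) ^ 2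
        = (A * B ^ (k + 1)) * ((k.factorial : ℝ) * ((s - 1).factorial : ℝ) * ((n : ℝ) + 1) ^ 2) := by
          ring
      _ ≤ (A * B ^ (k + 1)) * (4 * 4 ^ k * (s : ℝ) ^ 2 * (n.factorial : ℝ)) :=
          mul_le_mul_of_nonneg_left hf (by positivity)
      _ = (A * (32 * B) ^ (k + 1)) * ((1 / 8) ^ (k + 1) * (n.factorial : ℝ) * (s : ℝ) ^ 2) := by
          have h48 : (32 : ℝ) ^ k * ((1 : ℝ) / 8) ^ k = (4 : ℝ) ^ k := by
            rw [← mul_pow]; norm_num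
          linear_combination (A * B * B ^ k * (s : ℝ) ^ 2 * (n.factorial : ℝ) * (-4)) * h48
      _ ≤ (M ^ (k + 1)) * ((1 / 8) ^ (k + 1) * (n.factorial : ℝ) * (s : ℝ) ^ 2) :=
          mul_le_mul_of_nonneg_right hcore (by positivity)
      _ = M ^ (k + 1) * (1 / 8) ^ (k + 1) * (n.factorial : ℝ) * (s : ℝ) ^ 2 := by ring
  -- step 2': without eps and the (1/2)^m' factor
  have hwfn_s : wfn s = ((s - 1).factorial : ℝ) / (s : ℝ) ^ 2 := rfl
  have hspos : (0 : ℝ) < (s : ℝ) := by exact_mod_cast hs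
  have hstep2 : A * B ^ (k + 1) * (k.factorial : ℝ) * (M ^ s * wfn s)
      ≤ M ^ (n + 1) * wfn (n + 1) * (1 / 8) ^ (k + 1) := by
    have hpow : M ^ (n + 1) = M ^ (k + 1) * M ^ s := by
      rw [← pow_add]; congr 1; omega
    rw [hpow, hwfn_s, wfn_succ]
    have hdiv : A * B ^ (k + 1) * (k.factorial : ℝ) * (((s - 1).factorial : ℝ) / (s : ℝ) ^ 2)
        ≤ M ^ (k + 1) * ((n.factorial : ℝ) / ((n : ℝ) + 1) ^ 2) * (1 / 8) ^ (k + 1) := by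
      rw [show A * B ^ (k + 1) * (k.factorial : ℝ) * (((s - 1).factorial : ℝ) / (s : ℝ) ^ 2)
          = (A * B ^ (k + 1) * (k.factorial : ℝ) * ((s - 1).factorial : ℝ)) / (s : ℝ) ^ 2 by ring]
      rw [show M ^ (k + 1) * ((n.factorial : ℝ) / ((n : ℝ) + 1) ^ 2) * (1 / 8) ^ (k + 1)
          = (M ^ (k + 1) * (1 / 8) ^ (k + 1) * (n.factorial : ℝ)) / ((n : ℝ) + 1) ^ 2 by ring]
      rw [div_le_div_iff₀ (by positivity) (by positivity)]
      calc A * B ^ (k + 1) * (k.factorial : ℝ) * ((s - 1).factorial : ℝ) * (((n : ℝ) + 1) ^ 2)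
          ≤ M ^ (k + 1) * (1 / 8) ^ (k + 1) * (n.factorial : ℝ) * (s : ℝ) ^ 2 := hpoly
        _ = M ^ (k + 1) * (1 / 8) ^ (k + 1) * (n.factorial : ℝ) * (s : ℝ) ^ 2 := by ring
    calc A * B ^ (k + 1) * (k.factorial : ℝ) * (M ^ s * (((s - 1).factorial : ℝ) / (s : ℝ) ^ 2))
        = (A * B ^ (k + 1) * (k.factorial : ℝ) * (((s - 1).factorial : ℝ) / (s : ℝ) ^ 2)) * M ^ s := by
          ring
      _ ≤ (M ^ (k + 1) * ((n.factorial : ℝ) / ((n : ℝ) + 1) ^ 2) * (1 / 8) ^ (k + 1)) * M ^ s :=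
          mul_le_mul_of_nonneg_right hdiv (by positivity)
      _ = M ^ (k + 1) * M ^ s * ((n.factorial : ℝ) / ((n : ℝ) + 1) ^ 2) * (1 / 8) ^ (k + 1) := by
          ring
  -- assemble with the (16*eps*B)^m' factor
  have hgeom : (16 * eps * B) ^ m' ≤ (1 / 2) ^ m' := by
    apply pow_le_pow_left₀ (by positivity)
    linarith
  have hfac : A * B ^ (k + (m' + 1)) * (k.factorial : ℝ) *
      (eps ^ (m' + 1) * (M ^ s * (16 ^ m' * wfn s)))
      = (A * B ^ (k + 1) * (k.factorial : ℝ) * (M ^ s * wfn s)) * eps * (16 * eps * B) ^ m' := by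
    rw [show k + (m' + 1) = (k + 1) + m' by omega, pow_add, mul_pow, mul_pow, pow_add, pow_one]
    ring
  rw [hfac]
  calc (A * B ^ (k + 1) * (k.factorial : ℝ) * (M ^ s * wfn s)) * eps * (16 * eps * B) ^ m'
      ≤ (M ^ (n + 1) * wfn (n + 1) * (1 / 8) ^ (k + 1)) * eps * (1 / 2) ^ m' := by
        apply mul_le_mul _ hgeom (by positivity)
          (mul_nonneg (mul_nonneg (mul_nonneg (pow_nonneg hMpos.le _) (wfn_nonneg _))
            (by positivity)) heps.le)
        exact mul_le_mul_of_nonneg_right hstep2 heps.le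
    _ = eps * M ^ (n + 1) * wfn (n + 1) * ((1 / 8) ^ (k + 1) * (1 / 2) ^ m') := by ring


lemma key_numeric (A B eps M : ℝ) (hA : 0 < A) (hB : 0 < B) (heps : 0 < eps)
    (hepsB : 32 * eps * B ≤ 1) (h4B : 4 * B ≤ M) (h4A : 4 * A ≤ eps * M)
    (hM32 : 32 * B * (A + 1) ≤ M) (n : ℕ) :
    ∑ k ∈ Finset.range (n + 1), ∑ m ∈ Finset.range (n - k + 1),
        A * B ^ (k + m) * (k.factorial : ℝ) *
          (eps ^ m * (M ^ (n - k) * ∑ t ∈ comps m (n - k), ∏ j, wfn (t j)))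
      ≤ eps * M ^ (n + 1) * wfn (n + 1) := by
  have hMpos : 0 < M := lt_of_lt_of_le (by positivity) h4B
  set T := eps * M ^ (n + 1) * wfn (n + 1) with hT
  have hTnn : 0 ≤ T := mul_nonneg (by positivity) (wfn_nonneg _)
  have hinner : ∀ k ∈ Finset.range (n + 1),
      (∑ m ∈ Finset.range (n - k + 1), A * B ^ (k + m) * (k.factorial : ℝ) *
          (eps ^ m * (M ^ (n - k) * ∑ t ∈ comps m (n - k), ∏ j, wfn (t j))))
        ≤ T * ((if k = n then (1 : ℝ) / 4 else 0) + (1 / 8) ^ (k + 1) * 2) := by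
    intro k hk
    have hk' : k ≤ n := Nat.lt_succ_iff.mp (Finset.mem_range.mp hk)
    rw [Finset.sum_range_succ']
    have h0 : A * B ^ (k + 0) * (k.factorial : ℝ) *
        (eps ^ 0 * (M ^ (n - k) * ∑ t ∈ comps 0 (n - k), ∏ j, wfn (t j)))
        ≤ T * (if k = n then (1 : ℝ) / 4 else 0) := by
      rw [sum_comps_zero]
      rcases eq_or_ne k n with hkn | hkn
      · subst hkn
        rw [if_pos rfl, Nat.sub_self, if_pos rfl]
        rw [pow_zero, pow_zero, Nat.add_zero, mul_one, one_mul, mul_one]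
        have h1 : ((k : ℝ) + 1) ^ 2 ≤ 4 ^ k := nat_succ_sq_le k
        have h2 : (4 * B) ^ k ≤ M ^ k := pow_le_pow_left₀ (by positivity) h4B k
        have hA4 : A * B ^ k * ((k : ℝ) + 1) ^ 2 ≤ eps * M ^ (k + 1) * (1 / 4) := by
          calc A * B ^ k * ((k : ℝ) + 1) ^ 2
              ≤ A * B ^ k * 4 ^ k := mul_le_mul_of_nonneg_left h1 (by positivity)
            _ = A * (4 * B) ^ k := by rw [mul_pow]; ring
            _ ≤ (eps * M / 4) * M ^ k := by
                apply mul_le_mul (by linarith) h2 (by positivity) (by positivity)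
            _ = eps * M ^ (k + 1) * (1 / 4) := by rw [pow_succ]; ring
        have hne : ((k : ℝ) + 1) ^ 2 ≠ 0 := by positivity
        calc A * B ^ k * (k.factorial : ℝ)
            = (A * B ^ k * ((k : ℝ) + 1) ^ 2) * ((k.factorial : ℝ) / ((k : ℝ) + 1) ^ 2) := by
              field_simp
          _ ≤ (eps * M ^ (k + 1) * (1 / 4)) * ((k.factorial : ℝ) / ((k : ℝ) + 1) ^ 2) :=
              mul_le_mul_of_nonneg_right hA4 (by positivity)
          _ = T * (1 / 4) := by rw [hT, wfn_succ]; ring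
      · have hnk : ¬ (n - k = 0) := by omega
        rw [if_neg hnk, if_neg hkn]
        simp
    have hsucc : ∀ m' ∈ Finset.range (n - k),
        A * B ^ (k + (m' + 1)) * (k.factorial : ℝ) *
          (eps ^ (m' + 1) * (M ^ (n - k) * ∑ t ∈ comps (m' + 1) (n - k), ∏ j, wfn (t j)))
        ≤ T * ((1 / 8) ^ (k + 1) * (1 / 2) ^ m') := by
      intro m' hm'
      have hs : 1 ≤ n - k := by have := Finset.mem_range.mp hm'; omega
      have hks : k + (n - k) = n := by omega
      have hS := comps_prod_bound m' (n - k)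
      calc A * B ^ (k + (m' + 1)) * (k.factorial : ℝ) *
            (eps ^ (m' + 1) * (M ^ (n - k) * ∑ t ∈ comps (m' + 1) (n - k), ∏ j, wfn (t j)))
          ≤ A * B ^ (k + (m' + 1)) * (k.factorial : ℝ) *
            (eps ^ (m' + 1) * (M ^ (n - k) * (16 ^ m' * wfn (n - k)))) := by
            apply mul_le_mul_of_nonneg_left _ (by positivity)
            apply mul_le_mul_of_nonneg_left _ (by positivity)
            exact mul_le_mul_of_nonneg_left hS (by positivity)
        _ ≤ T * ((1 / 8) ^ (k + 1) * (1 / 2) ^ m') := per_term_bound A B eps M hA hB heps hepsB hM32 k m' (n - k) n hks hs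
    calc (∑ m' ∈ Finset.range (n - k), A * B ^ (k + (m' + 1)) * (k.factorial : ℝ) *
            (eps ^ (m' + 1) * (M ^ (n - k) * ∑ t ∈ comps (m' + 1) (n - k), ∏ j, wfn (t j))))
          + A * B ^ (k + 0) * (k.factorial : ℝ) *
            (eps ^ 0 * (M ^ (n - k) * ∑ t ∈ comps 0 (n - k), ∏ j, wfn (t j)))
        ≤ (∑ m' ∈ Finset.range (n - k), T * ((1 / 8) ^ (k + 1) * (1 / 2) ^ m'))
            + T * (if k = n then (1 : ℝ) / 4 else 0) :=
          add_le_add (Finset.sum_le_sum hsucc) h0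
      _ ≤ T * ((if k = n then (1 : ℝ) / 4 else 0) + (1 / 8) ^ (k + 1) * 2) := by
          have hsum : ∑ m' ∈ Finset.range (n - k), T * ((1 / 8) ^ (k + 1) * (1 / 2) ^ m')
              = (T * (1 / 8) ^ (k + 1)) * ∑ m' ∈ Finset.range (n - k), ((1 : ℝ) / 2) ^ m' := by
            rw [Finset.mul_sum]
            exact Finset.sum_congr rfl fun m' _ => by ring
          rw [hsum]
          have hg : ∑ m' ∈ Finset.range (n - k), ((1 : ℝ) / 2) ^ m' ≤ 2 :=
            sum_geometric_two_le _
          have hTk : (0 : ℝ) ≤ T * (1 / 8) ^ (k + 1) := by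
            apply mul_nonneg hTnn (by positivity)
          nlinarith [mul_le_mul_of_nonneg_left hg hTk]
  calc ∑ k ∈ Finset.range (n + 1), ∑ m ∈ Finset.range (n - k + 1),
        A * B ^ (k + m) * (k.factorial : ℝ) *
          (eps ^ m * (M ^ (n - k) * ∑ t ∈ comps m (n - k), ∏ j, wfn (t j)))
      ≤ ∑ k ∈ Finset.range (n + 1),
          T * ((if k = n then (1 : ℝ) / 4 else 0) + (1 / 8) ^ (k + 1) * 2) :=
        Finset.sum_le_sum hinner
    _ = T * ((∑ k ∈ Finset.range (n + 1), if k = n then (1 : ℝ) / 4 else 0)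
          + ∑ k ∈ Finset.range (n + 1), ((1 : ℝ) / 8) ^ (k + 1) * 2) := by
        rw [← Finset.mul_sum, Finset.sum_add_distrib]
    _ ≤ T := by
        have h1 : (∑ k ∈ Finset.range (n + 1), if k = n then (1 : ℝ) / 4 else 0) = 1 / 4 := by
          rw [Finset.sum_ite_eq' (Finset.range (n + 1)) n (fun _ => (1 : ℝ) / 4)]
          simp
        have h2 : ∑ k ∈ Finset.range (n + 1), ((1 : ℝ) / 8) ^ (k + 1) * 2 ≤ 1 / 2 := by
          calc ∑ k ∈ Finset.range (n + 1), ((1 : ℝ) / 8) ^ (k + 1) * 2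
              ≤ ∑ k ∈ Finset.range (n + 1), ((1 : ℝ) / 2) ^ k * (1 / 4) := by
                refine Finset.sum_le_sum fun k _ => ?_
                have : ((1 : ℝ) / 8) ^ k ≤ ((1 : ℝ) / 2) ^ k :=
                  pow_le_pow_left₀ (by norm_num) (by norm_num) k
                calc ((1 : ℝ) / 8) ^ (k + 1) * 2 = ((1 : ℝ) / 8) ^ k * (1 / 4) := by
                      rw [pow_succ]; ring
                  _ ≤ ((1 : ℝ) / 2) ^ k * (1 / 4) := by linarith
            _ = (1 / 4) * ∑ k ∈ Finset.range (n + 1), ((1 : ℝ) / 2) ^ k := by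
                rw [Finset.mul_sum]
                exact Finset.sum_congr rfl fun k _ => by ring
            _ ≤ (1 / 4) * 2 := by
                have := sum_geometric_two_le (n + 1)
                linarith
            _ = 1 / 2 := by norm_num
        rw [h1]
        nlinarith [hTnn, h2]

end GevAux

/-- **Gevrey bound for the formal solution of the standard-form equation (scalar case).**
If `|G_{km}(x)| ≤ A·B^{k+m}·k!` on `X₀` and `g₀ = 0`,
`g_{n+1} = Σ_{k=0}^{n} Σ_{m=0}^{n−k} Σ_{i₁+⋯+i_m=n−k} G_{km}·g_{i₁}⋯g_{i_m}`, then there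
is `M > 0` with `|g_{n+1}(x)| ≤ M^{n+1}·n!` on `X₀`; in particular the formal Borel
transform `Σ_n g_{n+1}(x)·ξⁿ/n!` converges uniformly on `X₀` for `|ξ| < 1/M`. -/
theorem gevrey_bound_standard_form_scalar
    {d : ℕ}
    (X₀ : Set (Fin d → ℂ)) (hX₀ : IsCxDomain X₀)
    (Gkm : ℕ → ℕ → (Fin d → ℂ) → ℂ)
    (hGkmhol : ∀ k m, DifferentiableOn ℂ (Gkm k m) X₀)
    (A B : ℝ) (hA : 0 < A) (hB : 0 < B)
    (hbd : ∀ k m : ℕ, ∀ x ∈ X₀, ‖Gkm k m x‖ ≤ A * B ^ (k + m) * k.factorial)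
    (g : ℕ → (Fin d → ℂ) → ℂ)
    (hghol : ∀ n, DifferentiableOn ℂ (g n) X₀)
    (hg0 : ∀ x, g 0 x = 0)
    (hgrec : ∀ n : ℕ, ∀ x ∈ X₀, g (n + 1) x =
      ∑ k ∈ Finset.range (n + 1), ∑ m ∈ Finset.range (n - k + 1),
        ∑ t ∈ comps m (n - k), Gkm k m x * ∏ j, g (t j) x) :
    ∃ M > (0 : ℝ),
      (∀ n : ℕ, ∀ x ∈ X₀, ‖g (n + 1) x‖ ≤ M ^ (n + 1) * n.factorial) ∧
      (∀ ξ : ℂ, ‖ξ‖ < 1 / M →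
        TendstoUniformlyOn
          (fun (N : ℕ) (x : Fin d → ℂ) =>
            ∑ n ∈ Finset.range N, ξ ^ n / (n.factorial : ℂ) * g (n + 1) x)
          (fun x => ∑' n : ℕ, ξ ^ n / (n.factorial : ℂ) * g (n + 1) x)
          atTop X₀) := by
  classical
  have hB1 : (0 : ℝ) < B + 1 := by linarith
  set eps : ℝ := 1 / (32 * (B + 1)) with heps_def
  have heps : 0 < eps := by rw [heps_def]; positivity
  have heps1 : eps ≤ 1 := by
    rw [heps_def, div_le_one (by linarith)]
    linarith
  have hepsB : 32 * eps * B ≤ 1 := by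
    rw [heps_def, show (32 : ℝ) * (1 / (32 * (B + 1))) * B = B / (B + 1) by
      field_simp]
    rw [div_le_one hB1]
    linarith
  set M : ℝ := 32 * (B + 1) * (A + 1) * (1 / eps + 1) with hM_def
  have hinv : (0 : ℝ) < 1 / eps := by positivity
  have hMpos : 0 < M := by rw [hM_def]; positivity
  have hA1 : (1 : ℝ) ≤ A + 1 := by linarith
  have hE1 : (1 : ℝ) ≤ 1 / eps + 1 := by linarith
  have h4B : 4 * B ≤ M := by
    rw [hM_def]
    nlinarith [mul_nonneg hB1.le (mul_nonneg hA.le hinv.le), mul_nonneg hA.le hB.le,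
      mul_nonneg hB1.le hinv.le, mul_nonneg hA.le hinv.le]
  have h4A : 4 * A ≤ eps * M := by
    have hepsM : eps * M = 32 * (B + 1) * (A + 1) * (1 + eps) := by
      rw [hM_def]
      field_simp
      try ring
    rw [hepsM]
    nlinarith [mul_nonneg hB.le hA.le, mul_nonneg hB.le heps.le, mul_nonneg hA.le heps.le,
      mul_nonneg (mul_nonneg hB.le hA.le) heps.le]
  have hM32 : 32 * B * (A + 1) ≤ M := by
    rw [hM_def]
    nlinarith [mul_nonneg (mul_nonneg hB.le (le_trans zero_le_one hA1)) hinv.le, mul_nonneg (le_trans zero_le_one hA1) hinv.le,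
      mul_nonneg hB.le hA.le]
  clear_value M
  clear_value eps
  have key : ∀ n : ℕ, ∀ x ∈ X₀, ‖g n x‖ ≤ eps * M ^ n * GevAux.wfn n := by
    intro n
    induction n using Nat.strong_induction_on with
    | _ n ih =>
    cases n with
    | zero =>
      intro x hx
      rw [hg0]
      simp [GevAux.wfn_zero]
    | succ n =>
      intro x hx
      rw [hgrec n x hx]
      have hstep : ∀ k ∈ Finset.range (n + 1), ∀ m ∈ Finset.range (n - k + 1),
          ‖∑ t ∈ comps m (n - k), Gkm k m x * ∏ j, g (t j) x‖
            ≤ A * B ^ (k + m) * (k.factorial : ℝ) *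
              (eps ^ m * (M ^ (n - k) * ∑ t ∈ comps m (n - k), ∏ j, GevAux.wfn (t j))) := by
        intro k hk m hm
        calc ‖∑ t ∈ comps m (n - k), Gkm k m x * ∏ j, g (t j) x‖
            ≤ ∑ t ∈ comps m (n - k), ‖Gkm k m x * ∏ j, g (t j) x‖ := norm_sum_le _ _
          _ ≤ ∑ t ∈ comps m (n - k), A * B ^ (k + m) * (k.factorial : ℝ) *
                (eps ^ m * (M ^ (n - k) * ∏ j, GevAux.wfn (t j))) := by
              refine Finset.sum_le_sum fun t ht => ?_
              have hsum_t : ∑ i, t i = n - k := GevAux.mem_comps.mp ht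
              have hprod : ∏ j, (eps * M ^ (t j) * GevAux.wfn (t j))
                  = eps ^ m * (M ^ (n - k) * ∏ j, GevAux.wfn (t j)) := by
                rw [Finset.prod_mul_distrib, Finset.prod_mul_distrib, Finset.prod_const,
                  Finset.card_univ, Fintype.card_fin, Finset.prod_pow_eq_pow_sum, hsum_t]
                ring
              have hprodle : ∏ j, ‖g (t j) x‖ ≤ ∏ j, (eps * M ^ (t j) * GevAux.wfn (t j)) := by
                refine Finset.prod_le_prod (fun j _ => norm_nonneg _) fun j _ => ?_
                have hlt : t j < n + 1 := by
                  have h1 : t j ≤ ∑ i, t i :=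
                    Finset.single_le_sum (fun _ _ => Nat.zero_le _) (Finset.mem_univ j)
                  omega
                exact ih (t j) hlt x hx
              calc ‖Gkm k m x * ∏ j, g (t j) x‖
                  = ‖Gkm k m x‖ * ∏ j, ‖g (t j) x‖ := by rw [norm_mul, norm_prod]
                _ ≤ (A * B ^ (k + m) * (k.factorial : ℝ)) *
                      ∏ j, (eps * M ^ (t j) * GevAux.wfn (t j)) := by
                    apply mul_le_mul (hbd k m x hx) hprodle
                      (Finset.prod_nonneg fun j _ => norm_nonneg _) (by positivity)
                _ = A * B ^ (k + m) * (k.factorial : ℝ) *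
                      (eps ^ m * (M ^ (n - k) * ∏ j, GevAux.wfn (t j))) := by rw [hprod]
          _ = A * B ^ (k + m) * (k.factorial : ℝ) *
                (eps ^ m * (M ^ (n - k) * ∑ t ∈ comps m (n - k), ∏ j, GevAux.wfn (t j))) := by
              rw [Finset.sum_congr rfl (fun (t : Fin m → ℕ) (_ : t ∈ comps m (n - k)) =>
                show A * B ^ (k + m) * (k.factorial : ℝ) *
                    (eps ^ m * (M ^ (n - k) * ∏ j, GevAux.wfn (t j)))
                  = (A * B ^ (k + m) * (k.factorial : ℝ) * (eps ^ m * M ^ (n - k))) *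
                    ∏ j, GevAux.wfn (t j) from by ring), ← Finset.mul_sum]
              ring
      calc ‖∑ k ∈ Finset.range (n + 1), ∑ m ∈ Finset.range (n - k + 1),
              ∑ t ∈ comps m (n - k), Gkm k m x * ∏ j, g (t j) x‖
          ≤ ∑ k ∈ Finset.range (n + 1), ‖∑ m ∈ Finset.range (n - k + 1),
              ∑ t ∈ comps m (n - k), Gkm k m x * ∏ j, g (t j) x‖ := norm_sum_le _ _
        _ ≤ ∑ k ∈ Finset.range (n + 1), ∑ m ∈ Finset.range (n - k + 1),
              ‖∑ t ∈ comps m (n - k), Gkm k m x * ∏ j, g (t j) x‖ :=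
            Finset.sum_le_sum fun k _ => norm_sum_le _ _
        _ ≤ ∑ k ∈ Finset.range (n + 1), ∑ m ∈ Finset.range (n - k + 1),
              A * B ^ (k + m) * (k.factorial : ℝ) *
                (eps ^ m * (M ^ (n - k) * ∑ t ∈ comps m (n - k), ∏ j, GevAux.wfn (t j))) :=
            Finset.sum_le_sum fun k hk => Finset.sum_le_sum fun m hm => hstep k hk m hm
        _ ≤ eps * M ^ (n + 1) * GevAux.wfn (n + 1) :=
            GevAux.key_numeric A B eps M hA hB heps hepsB h4B h4A hM32 n
  have hbound : ∀ n : ℕ, ∀ x ∈ X₀, ‖g (n + 1) x‖ ≤ M ^ (n + 1) * n.factorial := by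
    intro n x hx
    have h := key (n + 1) x hx
    have hd : (n.factorial : ℝ) / ((n : ℝ) + 1) ^ 2 ≤ (n.factorial : ℝ) := by
      apply div_le_self (by positivity)
      nlinarith [Nat.cast_nonneg (α := ℝ) n]
    calc ‖g (n + 1) x‖ ≤ eps * M ^ (n + 1) * GevAux.wfn (n + 1) := h
      _ = eps * M ^ (n + 1) * ((n.factorial : ℝ) / ((n : ℝ) + 1) ^ 2) := by
          rw [GevAux.wfn_succ]
      _ ≤ 1 * M ^ (n + 1) * (n.factorial : ℝ) := by
          apply mul_le_mul (mul_le_mul heps1 le_rfl (by positivity) (by norm_num)) hd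
            (by positivity) (by positivity)
      _ = M ^ (n + 1) * (n.factorial : ℝ) := by ring
  refine ⟨M, hMpos, hbound, ?_⟩
  intro ξ hξ
  have hξM : ‖ξ‖ * M < 1 := by
    rw [lt_div_iff₀ hMpos] at hξ
    linarith
  have hu_sum : Summable (fun n : ℕ => M * (‖ξ‖ * M) ^ n) :=
    (summable_geometric_of_lt_one (by positivity) hξM).mul_left M
  apply tendstoUniformlyOn_tsum_nat hu_sum
  intro n x hx
  have hb := hbound n x hx
  have hfne : ((n.factorial : ℝ)) ≠ 0 := by
    exact_mod_cast Nat.factorial_ne_zero n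
  calc ‖ξ ^ n / (n.factorial : ℂ) * g (n + 1) x‖
      = ‖ξ‖ ^ n / (n.factorial : ℝ) * ‖g (n + 1) x‖ := by
        rw [norm_mul, norm_div, norm_pow, Complex.norm_natCast]
    _ ≤ ‖ξ‖ ^ n / (n.factorial : ℝ) * (M ^ (n + 1) * (n.factorial : ℝ)) := by
        apply mul_le_mul_of_nonneg_left hb (by positivity)
    _ = M * (‖ξ‖ * M) ^ n := by
        rw [div_mul_eq_mul_div, mul_div_assoc, mul_div_cancel_right₀ _ hfne, mul_pow, pow_succ]
        ring
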